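/- Let β : Fin d^{N−1} → ℝ (indexed by (N−1)-tuples of indices in Fin d) be nonnegative with ∑ β_{j...k}² = 1. Then, for any fixed choice of m positions among the N−1 coordinates, the sum of β_{j...l r...k} · β_{j...l r₁...k₁} over all index tuples agreeing outside those m positions and such that r ≠ r₁, ..., k ≠ k₁ in each of the m chosen positions, is at most (d−1)^m. -/

import Mathlib

open Finset

lemma count_aux (n d : ℕ) (M : Finset (Fin n)) (a : Fin n → Fin d) :
    (Finset.univ.filter fun b : Fin n → Fin d =>
      (∀ i ∈ M, a i ≠ b i) ∧ (∀ i ∉ M, a i = b i)).card = (d - 1) ^ M.card := by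
  have : (Finset.univ.filter fun b : Fin n → Fin d =>
      (∀ i ∈ M, a i ≠ b i) ∧ (∀ i ∉ M, a i = b i))
      = Fintype.piFinset (fun i => if i ∈ M then ({a i}ᶜ : Finset (Fin d)) else {a i}) := by
    ext b
    simp only [mem_filter, mem_univ, true_and, Fintype.mem_piFinset]
    constructor
    · rintro ⟨h1, h2⟩ i
      by_cases hi : i ∈ M
      · simp [hi, (h1 i hi).symm]
      · simp [hi, (h2 i hi).symm]
    · intro h
      constructor
      · intro i hi
        have := h i
        simp [hi] at this
        exact fun he => this he.symm
      · intro i hi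
        have := h i
        simp [hi] at this
        exact this.symm
  rw [this, Fintype.card_piFinset]
  have : ∀ i : Fin n, (if i ∈ M then ({a i}ᶜ : Finset (Fin d)) else {a i}).card
      = if i ∈ M then d - 1 else 1 := by
    intro i
    by_cases hi : i ∈ M <;> simp [hi, Finset.card_compl]
  simp_rw [this]
  rw [Finset.prod_ite, Finset.prod_const, Finset.prod_const, one_pow, mul_one]
  congr 1
  simp [Finset.filter_mem_eq_inter]

theorem stmt_1 (N d : ℕ) (hN : 1 ≤ N) (hd : 1 ≤ d)
    (β : (Fin (N - 1) → Fin d) → ℝ) (hβ : ∀ t, 0 ≤ β t)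
    (hsum : ∑ t, (β t) ^ 2 = 1) (M : Finset (Fin (N - 1))) :
    ∑ p ∈ Finset.univ.filter
        (fun p : ((Fin (N - 1) → Fin d) × (Fin (N - 1) → Fin d)) =>
          (∀ i ∈ M, p.1 i ≠ p.2 i) ∧ (∀ i ∉ M, p.1 i = p.2 i)),
        β p.1 * β p.2
      ≤ ((d : ℝ) - 1) ^ M.card := by
  set P : ((Fin (N - 1) → Fin d) × (Fin (N - 1) → Fin d)) → Prop :=
    fun p => (∀ i ∈ M, p.1 i ≠ p.2 i) ∧ (∀ i ∉ M, p.1 i = p.2 i) with hP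
  set S := Finset.univ.filter P with hS
  have hswap : ∀ p ∈ S, p.swap ∈ S := by
    rintro ⟨a, b⟩ hp
    simp only [hS, hP, mem_filter, mem_univ, true_and] at hp ⊢
    exact ⟨fun i hi => (hp.1 i hi).symm, fun i hi => (hp.2 i hi).symm⟩
  have step1 : ∑ p ∈ S, β p.1 * β p.2 ≤ ∑ p ∈ S, ((β p.1) ^ 2 + (β p.2) ^ 2) / 2 := by
    apply Finset.sum_le_sum
    intro p _
    nlinarith [sq_nonneg (β p.1 - β p.2)]
  have step2 : ∑ p ∈ S, (β p.2) ^ 2 = ∑ p ∈ S, (β p.1) ^ 2 := by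
    apply Finset.sum_nbij' (fun p => p.swap) (fun p => p.swap)
    · exact hswap
    · exact hswap
    all_goals intro p _ <;> simp
  have count : ∀ a : Fin (N - 1) → Fin d,
      (Finset.univ.filter fun b => P (a, b)).card = (d - 1) ^ M.card :=
    fun a => count_aux (N - 1) d M a
  have step3 : ∑ p ∈ S, (β p.1) ^ 2 = ((d - 1 : ℕ) : ℝ) ^ M.card := by
    rw [hS, Finset.sum_filter, Fintype.sum_prod_type]
    have : ∀ a : Fin (N - 1) → Fin d,
        (∑ b, if P (a, b) then (β a) ^ 2 else 0) = ((d - 1 : ℕ) : ℝ) ^ M.card * (β a) ^ 2 := by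
      intro a
      rw [← Finset.sum_filter, Finset.sum_const, count a, nsmul_eq_mul]
      push_cast
      ring
    simp only [hP] at this
    simp_rw [this, ← Finset.mul_sum, hsum, mul_one]
  have hcast : ((d - 1 : ℕ) : ℝ) = (d : ℝ) - 1 := by
    push_cast [Nat.cast_sub hd]
    ring
  calc ∑ p ∈ S, β p.1 * β p.2 ≤ ∑ p ∈ S, ((β p.1) ^ 2 + (β p.2) ^ 2) / 2 := step1
    _ = ∑ p ∈ S, (β p.1) ^ 2 := by
        rw [← Finset.sum_div, Finset.sum_add_distrib, step2]
        ring
    _ = ((d : ℝ) - 1) ^ M.card := by rw [step3, hcast]
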